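/- For every j ∈ ℤ there are exactly 10 colored partitions π with shape {j−1, j−1, j} and weight wt(π) = (−1,−2), namely the partitions X_a(j−1)X_b(j−1)X_c(j) with ({a,b}; c) equal to ({6,5};8), ({6,4};8), ({8,2};8), ({6,6};7), ({7,6};6), ({8,5};6), ({8,4};6), ({8,6};5), ({8,6};4), ({8,8};2); moreover the sum of N(π) over these ten partitions equals 7. -/

import Mathlib

/-- A colored partition: a finitely supported multiplicity function on parts `X_s(j)`,
where `s` is the color and `j ∈ ℤ` the degree.  (Genuine colored partitions have
colors in `{1,…,8}`, expressed by `cpValid`.) -/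
abbrev CPart := (ℕ × ℤ) →₀ ℕ

/-- The colored partition consisting of the single part `X_s(j)`. -/
noncomputable def Xp (s : ℕ) (j : ℤ) : CPart := Finsupp.single (s, j) 1

/-- The colors of all parts lie in `{1,…,8}`. -/
def cpValid (π : CPart) : Prop := ∀ p ∈ π.support, 1 ≤ p.1 ∧ p.1 ≤ 8

/-- The length `ℓ(π)`: the total number of parts. -/
def cpLength (π : CPart) : ℕ := π.sum fun _ m => m

/-- The degree `|π|`: the sum of the degrees of the parts. -/
def cpDeg (π : CPart) : ℤ := π.sum fun p m => (m : ℤ) * p.2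

/-- The shape `sh(π)`: the multiset of the degrees of the parts. -/
def cpShape (π : CPart) : Multiset ℤ := π.sum fun p m => Multiset.replicate m p.2

/-- `ρ ⊂ π` : `ρ` is a subpartition of `π`. -/
def cpSub (ρ π : CPart) : Prop := ∀ p, ρ p ≤ π p

/-- The color pairs `(i₁,i₂)` for elements `X_{i₁}(j)X_{i₂}(j)` of `lt(R̄)`. -/
def eqPairs : List (ℕ × ℕ) :=
  [(1,1),(2,1),(2,2),(3,1),(3,2),(3,3),(4,2),(4,3),(4,4),(5,1),(5,2),(5,3),(5,4),(5,5),
   (6,2),(6,4),(6,5),(6,6),(7,3),(7,4),(7,5),(7,6),(7,7),(8,5),(8,6),(8,7),(8,8)]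

/-- The color pairs `(i₁,i₂)` for elements `X_{i₁}(j−1)X_{i₂}(j)` of `lt(R̄)`. -/
def adjPairs : List (ℕ × ℕ) :=
  [(1,1),(1,2),(1,3),(1,4),(1,5),(1,6),(1,7),(1,8),(2,2),(2,4),(2,6),(2,7),(2,8),
   (3,3),(3,5),(3,6),(3,7),(3,8),(4,7),(4,8),(5,6),(5,8),(6,6),(6,8),(7,7),(7,8),(8,8)]

/-- The set `lt(R̄)` of leading terms of the quadratic relations. -/
def ltR : Set CPart :=
  {ρ | ∃ j : ℤ, ∃ p ∈ eqPairs, ρ = Xp p.1 j + Xp p.2 j} ∪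
  {ρ | ∃ j : ℤ, ∃ p ∈ adjPairs, ρ = Xp p.1 (j-1) + Xp p.2 j}

/-- `E(π) = {ρ ∈ lt(R̄) : ρ ⊂ π}`. -/
def Eset (π : CPart) : Set CPart := {ρ | ρ ∈ ltR ∧ cpSub ρ π}

/-- `N(π) = max(#E(π) − 1, 0)`. -/
noncomputable def Npi (π : CPart) : ℕ := (Eset π).ncard - 1

/-- The set `R`: `lt(R̄)` together with the two families of cubic leading terms. -/
def Rset : Set CPart :=
  ltR ∪ {ρ | ∃ j : ℤ, ρ = Xp 3 (j-1) + Xp 4 j + Xp 1 j ∨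
    ρ = Xp 8 (j-1) + Xp 4 (j-1) + Xp 6 j}

/-- The `𝔥`-weight of the color `s`, written in the basis `(α₁, α₂)`. -/
def wcol : ℕ → ℤ × ℤ
  | 1 => (1, 1)
  | 2 => (1, 0)
  | 3 => (0, 1)
  | 4 => (0, 0)
  | 5 => (0, 0)
  | 6 => (0, -1)
  | 7 => (-1, 0)
  | 8 => (-1, -1)
  | _ => (0, 0)

/-- The weight `wt(π) ∈ ℤ²`. -/
def cpWt (π : CPart) : ℤ × ℤ := π.sum fun p m => m • wcol p.1

/-- The ten colored partitions `X_a(j−1)X_b(j−1)X_c(j)` of Lemma 7(b). -/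
noncomputable def tenB (j : ℤ) : List CPart :=
  [Xp 6 (j-1) + Xp 5 (j-1) + Xp 8 j,
   Xp 6 (j-1) + Xp 4 (j-1) + Xp 8 j,
   Xp 8 (j-1) + Xp 2 (j-1) + Xp 8 j,
   Xp 6 (j-1) + Xp 6 (j-1) + Xp 7 j,
   Xp 7 (j-1) + Xp 6 (j-1) + Xp 6 j,
   Xp 8 (j-1) + Xp 5 (j-1) + Xp 6 j,
   Xp 8 (j-1) + Xp 4 (j-1) + Xp 6 j,
   Xp 8 (j-1) + Xp 6 (j-1) + Xp 5 j,
   Xp 8 (j-1) + Xp 6 (j-1) + Xp 4 j,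
   Xp 8 (j-1) + Xp 8 (j-1) + Xp 2 j]

section Aux

open Finsupp Multiset

private lemma toM_inj : Function.Injective (Finsupp.toMultiset (α := ℕ × ℤ)) := by
  classical
  intro f g h
  ext a
  rw [← Finsupp.count_toMultiset, ← Finsupp.count_toMultiset, h]

private lemma cpSub_iff (ρ π : CPart) : cpSub ρ π ↔ ρ.toMultiset ≤ π.toMultiset := by
  classical
  rw [Multiset.le_iff_count]
  constructor
  · intro h a; simpa [Finsupp.count_toMultiset] using h a
  · intro h a; simpa [Finsupp.count_toMultiset] using h a

private lemma toM_Xp (s : ℕ) (k : ℤ) : (Xp s k).toMultiset = {(s,k)} := by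
  simp [Xp]

private lemma toM_two (a b : ℕ) (u v : ℤ) :
    (Xp a u + Xp b v).toMultiset = {(a,u), (b,v)} := by
  rw [Finsupp.toMultiset_add, toM_Xp, toM_Xp]; rfl

private lemma toM_three (a b c : ℕ) (u v w : ℤ) :
    (Xp a u + Xp b v + Xp c w).toMultiset = {(a,u), (b,v), (c,w)} := by
  rw [Finsupp.toMultiset_add, toM_two, toM_Xp]; rfl

private lemma cpShape_eq (π : CPart) : cpShape π = π.toMultiset.map Prod.snd := by
  induction π using Finsupp.induction with
  | zero => simp [cpShape]
  | single_add p m f hf hm ih =>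
      rw [Finsupp.toMultiset_add, Multiset.map_add, ← ih, Finsupp.toMultiset_single,
        cpShape, Finsupp.sum_add_index' (fun _ => rfl)
          (fun p m n => Multiset.replicate_add m n p.2),
        Finsupp.sum_single_index rfl]
      rw [cpShape]
      congr 1
      rw [Multiset.map_nsmul, Multiset.map_singleton, Multiset.nsmul_singleton]

private lemma cpSub_self_add (f g : CPart) : cpSub f (f + g) := fun p => by
  rw [Finsupp.add_apply]; exact le_self_add

private lemma cpWt_add (f g : CPart) : cpWt (f + g) = cpWt f + cpWt g :=
  Finsupp.sum_add_index' (fun _ => zero_nsmul _) (fun p m n => add_nsmul _ m n)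

private lemma cpWt_Xp (s : ℕ) (k : ℤ) : cpWt (Xp s k) = wcol s := by
  simp [cpWt, Xp]

private lemma cpWt_three (a b c : ℕ) (u v w : ℤ) :
    cpWt (Xp a u + Xp b v + Xp c w) = wcol a + wcol b + wcol c := by
  rw [cpWt_add, cpWt_add, cpWt_Xp, cpWt_Xp, cpWt_Xp]

private lemma cpValid_add {f g : CPart} (hf : cpValid f) (hg : cpValid g) :
    cpValid (f + g) := by
  intro p hp
  rcases Finset.mem_union.mp (Finsupp.support_add hp) with h | h
  · exact hf p h
  · exact hg p h

private lemma cpValid_Xp {s : ℕ} (h1 : 1 ≤ s) (h2 : s ≤ 8) (k : ℤ) : cpValid (Xp s k) := by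
  intro p hp
  have : p = (s, k) := by
    simpa [Xp, Finsupp.support_single_ne_zero] using hp
  subst this
  exact ⟨h1, h2⟩

private lemma pair_eq {α : Type*} {x y z w : α} :
    ({x, y} : Multiset α) = {z, w} ↔ (x = z ∧ y = w) ∨ (x = w ∧ y = z) := by
  constructor
  · intro h
    simp only [Multiset.insert_eq_cons, Multiset.cons_eq_cons] at h
    rcases h with ⟨rfl, h⟩ | ⟨hne, cs, h1, h2⟩
    · rw [Multiset.singleton_inj] at h
      exact Or.inl ⟨rfl, h⟩
    · have hc : cs = 0 := by
        have h5 := congrArg Multiset.card h1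
        simp only [Multiset.card_singleton, Multiset.card_cons] at h5
        exact Multiset.card_eq_zero.mp (by omega)
      subst hc
      rw [Multiset.cons_zero, Multiset.singleton_inj] at h1 h2
      exact Or.inr ⟨h2.symm, h1⟩
  · rintro (⟨rfl, rfl⟩ | ⟨rfl, rfl⟩)
    · rfl
    · exact Multiset.pair_comm x y

private lemma pair_le_triple {α : Type*} {s : Multiset α} {x y z : α}
    (h : s ≤ {x, y, z}) (hc : Multiset.card s = 2) :
    s = {x, y} ∨ s = {x, z} ∨ s = {y, z} := by
  obtain ⟨u, hu⟩ := Multiset.le_iff_exists_add.mp h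
  have hcu : Multiset.card u = 1 := by
    have h3 := congrArg Multiset.card hu
    simp [hc] at h3
    omega
  obtain ⟨w, rfl⟩ := Multiset.card_eq_one.mp hcu
  rw [add_comm, Multiset.singleton_add] at hu
  have hw : w ∈ ({x, y, z} : Multiset α) := by
    rw [hu]; exact Multiset.mem_cons_self _ _
  simp only [Multiset.insert_eq_cons, Multiset.mem_cons, Multiset.mem_singleton] at hw
  rcases hw with rfl | rfl | rfl
  · have : w ::ₘ ({y, z} : Multiset α) = w ::ₘ s := hu
    rw [Multiset.cons_inj_right] at this
    exact Or.inr (Or.inr this.symm)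
  · have h4 : ({x, w, z} : Multiset α) = w ::ₘ {x, z} := by
      show x ::ₘ w ::ₘ z ::ₘ 0 = w ::ₘ x ::ₘ z ::ₘ 0
      rw [Multiset.cons_swap x w]
    rw [h4, Multiset.cons_inj_right] at hu
    exact Or.inr (Or.inl hu.symm)
  · have h4 : ({x, y, w} : Multiset α) = w ::ₘ {x, y} := by
      show x ::ₘ y ::ₘ w ::ₘ 0 = w ::ₘ x ::ₘ y ::ₘ 0
      rw [Multiset.cons_swap y w, Multiset.cons_swap x w]
    rw [h4, Multiset.cons_inj_right] at hu
    exact Or.inl hu.symm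

private lemma shape3 {π : CPart} {j : ℤ} (h : cpShape π = {j - 1, j - 1, j}) :
    ∃ a b c : ℕ, π = Xp a (j-1) + Xp b (j-1) + Xp c j := by
  classical
  rw [cpShape_eq] at h
  simp only [Multiset.insert_eq_cons] at h
  obtain ⟨p, hp, hp2, h1⟩ := (Multiset.map_eq_cons _ _ _ _).mpr h
  obtain ⟨q, hq, hq2, h2⟩ := (Multiset.map_eq_cons _ _ _ _).mpr h1
  obtain ⟨r, hr, hr2, h3⟩ := (Multiset.map_eq_cons _ _ 0 j).mpr h2
  have h0 : (((π.toMultiset.erase p).erase q).erase r) = 0 := by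
    have := congrArg Multiset.card h3
    simpa using this
  have hM : π.toMultiset = p ::ₘ q ::ₘ r ::ₘ 0 := by
    rw [← Multiset.cons_erase hp, ← Multiset.cons_erase hq, ← Multiset.cons_erase hr, h0]
  refine ⟨p.1, q.1, r.1, toM_inj ?_⟩
  rw [hM, toM_three]
  have hpp : p = (p.1, j - 1) := by rw [← hp2]
  have hqq : q = (q.1, j - 1) := by rw [← hq2]
  have hrr : r = (r.1, j) := by rw [← hr2]
  rw [hpp, hqq, hrr]
  rfl

end Aux


section Aux2

private lemma Eset_eq (a b c : ℕ) (j : ℤ) :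
    Eset (Xp a (j-1) + Xp b (j-1) + Xp c j) =
      {ρ | ((a,b) ∈ eqPairs ∨ (b,a) ∈ eqPairs) ∧ ρ = Xp a (j-1) + Xp b (j-1)} ∪
      {ρ | (a,c) ∈ adjPairs ∧ ρ = Xp a (j-1) + Xp c j} ∪
      {ρ | (b,c) ∈ adjPairs ∧ ρ = Xp b (j-1) + Xp c j} := by
  classical
  ext ρ
  simp only [Eset, Set.mem_setOf_eq, Set.mem_union]
  constructor
  · rintro ⟨hlt, hsub⟩
    rw [cpSub_iff, toM_three] at hsub
    rcases hlt with ⟨k, p, hp, rfl⟩ | ⟨k, p, hp, rfl⟩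
    · obtain ⟨p1, p2⟩ := p
      rw [toM_two] at hsub
      have hcard : Multiset.card ({(p1,k),(p2,k)} : Multiset (ℕ×ℤ)) = 2 := rfl
      rcases pair_le_triple hsub hcard with h | h | h
      · rcases pair_eq.mp h with ⟨h1, h2⟩ | ⟨h1, h2⟩
        · simp only [Prod.mk.injEq] at h1 h2
          obtain ⟨rfl, rfl⟩ := h1
          obtain ⟨rfl, -⟩ := h2
          exact Or.inl (Or.inl ⟨Or.inl hp, rfl⟩)
        · simp only [Prod.mk.injEq] at h1 h2
          obtain ⟨rfl, rfl⟩ := h1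
          obtain ⟨rfl, -⟩ := h2
          exact Or.inl (Or.inl ⟨Or.inr hp, add_comm _ _⟩)
      · rcases pair_eq.mp h with ⟨h1, h2⟩ | ⟨h1, h2⟩ <;>
          simp only [Prod.mk.injEq] at h1 h2 <;>
          exact absurd (h1.2 ▸ h2.2) (by omega)
      · rcases pair_eq.mp h with ⟨h1, h2⟩ | ⟨h1, h2⟩ <;>
          simp only [Prod.mk.injEq] at h1 h2 <;>
          exact absurd (h1.2 ▸ h2.2) (by omega)
    · obtain ⟨p1, p2⟩ := p
      rw [toM_two] at hsub
      have hcard : Multiset.card ({(p1,k-1),(p2,k)} : Multiset (ℕ×ℤ)) = 2 := rfl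
      rcases pair_le_triple hsub hcard with h | h | h
      · rcases pair_eq.mp h with ⟨h1, h2⟩ | ⟨h1, h2⟩ <;>
          simp only [Prod.mk.injEq] at h1 h2 <;>
          · have e1 := h1.2
            have e2 := h2.2
            omega
      · rcases pair_eq.mp h with ⟨h1, h2⟩ | ⟨h1, h2⟩
        · simp only [Prod.mk.injEq] at h1 h2
          obtain ⟨rfl, rfl⟩ := h2
          obtain ⟨rfl, -⟩ := h1
          exact Or.inl (Or.inr ⟨hp, rfl⟩)
        · simp only [Prod.mk.injEq] at h1 h2
          have e1 := h1.2
          have e2 := h2.2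
          omega
      · rcases pair_eq.mp h with ⟨h1, h2⟩ | ⟨h1, h2⟩
        · simp only [Prod.mk.injEq] at h1 h2
          obtain ⟨rfl, rfl⟩ := h2
          obtain ⟨rfl, -⟩ := h1
          exact Or.inr ⟨hp, rfl⟩
        · simp only [Prod.mk.injEq] at h1 h2
          have e1 := h1.2
          have e2 := h2.2
          omega
  · rintro ((⟨hp, rfl⟩ | ⟨hp, rfl⟩) | ⟨hp, rfl⟩)
    · refine ⟨Or.inl ?_, ?_⟩
      · rcases hp with hp | hp
        · exact ⟨j-1, (a,b), hp, rfl⟩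
        · exact ⟨j-1, (b,a), hp, add_comm _ _⟩
      · have h : Xp a (j-1) + Xp b (j-1) + Xp c j
            = (Xp a (j-1) + Xp b (j-1)) + Xp c j := by abel
        rw [h]; exact cpSub_self_add _ _
    · refine ⟨Or.inr ⟨j, (a,c), hp, rfl⟩, ?_⟩
      have h : Xp a (j-1) + Xp b (j-1) + Xp c j
          = (Xp a (j-1) + Xp c j) + Xp b (j-1) := by abel
      rw [h]; exact cpSub_self_add _ _
    · refine ⟨Or.inr ⟨j, (b,c), hp, rfl⟩, ?_⟩
      have h : Xp a (j-1) + Xp b (j-1) + Xp c j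
          = (Xp b (j-1) + Xp c j) + Xp a (j-1) := by abel
      rw [h]; exact cpSub_self_add _ _

private noncomputable def Fm (j : ℤ) : CPart → Multiset (ℕ × ℤ) :=
  fun π => π.toMultiset.map (fun p => (p.1, p.2 - j))

@[simp] private lemma Fm_add (j : ℤ) (f g : CPart) : Fm j (f + g) = Fm j f + Fm j g := by
  simp [Fm, Finsupp.toMultiset_add]

@[simp] private lemma Fm_Xp_pred (j : ℤ) (s : ℕ) : Fm j (Xp s (j-1)) = {(s, -1)} := by
  simp only [Fm, toM_Xp, Multiset.map_singleton]
  norm_num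

@[simp] private lemma Fm_Xp_self (j : ℤ) (s : ℕ) : Fm j (Xp s j) = {(s, 0)} := by
  simp [Fm, toM_Xp]

private lemma ne_of_Fm {j : ℤ} {f g : CPart} (h : Fm j f ≠ Fm j g) : f ≠ g :=
  fun e => h (by rw [e])

private def goodWt (a b c : ℕ) : Prop :=
  (a, b, c) ∈ [(6,5,8),(5,6,8),(6,4,8),(4,6,8),(8,2,8),(2,8,8),(6,6,7),
    (7,6,6),(6,7,6),(8,5,6),(5,8,6),(8,4,6),(4,8,6),(8,6,5),(6,8,5),
    (8,6,4),(6,8,4),(8,8,2)]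

private instance (a b c : ℕ) : Decidable (goodWt a b c) := by unfold goodWt; infer_instance

private lemma wt_classify' : ∀ a < 8, ∀ b < 8, ∀ c < 8,
    wcol (a+1) + wcol (b+1) + wcol (c+1) = (-1, -2) → goodWt (a+1) (b+1) (c+1) := by decide

private lemma wt_classify {a b c : ℕ} (ha1 : 1 ≤ a) (ha2 : a ≤ 8) (hb1 : 1 ≤ b)
    (hb2 : b ≤ 8) (hc1 : 1 ≤ c) (hc2 : c ≤ 8)
    (h : wcol a + wcol b + wcol c = (-1, -2)) : goodWt a b c := by
  have ea : a - 1 + 1 = a := by omega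
  have eb : b - 1 + 1 = b := by omega
  have ec : c - 1 + 1 = c := by omega
  have := wt_classify' (a-1) (by omega) (b-1) (by omega) (c-1) (by omega)
  rw [ea, eb, ec] at this
  exact this h

private lemma tenB_nodup (j : ℤ) : (tenB j).Nodup := by
  have hmap : (tenB j).map (Fm j) =
      [{(6,-1)} + {(5,-1)} + {(8,0)}, {(6,-1)} + {(4,-1)} + {(8,0)},
       {(8,-1)} + {(2,-1)} + {(8,0)}, {(6,-1)} + {(6,-1)} + {(7,0)},
       {(7,-1)} + {(6,-1)} + {(6,0)}, {(8,-1)} + {(5,-1)} + {(6,0)},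
       {(8,-1)} + {(4,-1)} + {(6,0)}, {(8,-1)} + {(6,-1)} + {(5,0)},
       {(8,-1)} + {(6,-1)} + {(4,0)}, {(8,-1)} + {(8,-1)} + {(2,0)}] := by
    simp [tenB]
  have h2 : ((tenB j).map (Fm j)).Nodup := by rw [hmap]; decide
  exact h2.of_map _

end Aux2


section Aux3

private lemma ncard_three {x y z : CPart} (h1 : x ≠ y) (h2 : x ≠ z) (h3 : y ≠ z) :
    ({x, y, z} : Set CPart).ncard = 3 := by
  rw [Set.ncard_insert_of_notMem (by simp [h1, h2]) (Set.toFinite _), Set.ncard_pair h3]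

end Aux3

private lemma NpiB1 (j : ℤ) : Npi (Xp 6 (j-1) + Xp 5 (j-1) + Xp 8 j) = 2 := by
  have hE : Eset (Xp 6 (j-1) + Xp 5 (j-1) + Xp 8 j) =
      {Xp 6 (j-1) + Xp 5 (j-1), Xp 6 (j-1) + Xp 8 j, Xp 5 (j-1) + Xp 8 j} := by
    have h1 : ((6,5) ∈ eqPairs ∨ (5,6) ∈ eqPairs) := by decide
    have h2 : (6,8) ∈ adjPairs := by decide
    have h3 : (5,8) ∈ adjPairs := by decide
    rw [Eset_eq]; ext ρ
    simp only [Set.mem_union, Set.mem_setOf_eq, Set.mem_insert_iff, Set.mem_singleton_iff]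
    tauto
  rw [Npi, hE, ncard_three (ne_of_Fm (j := j) (by simp only [Fm_add, Fm_Xp_pred, Fm_Xp_self]; decide))
    (ne_of_Fm (j := j) (by simp only [Fm_add, Fm_Xp_pred, Fm_Xp_self]; decide)) (ne_of_Fm (j := j) (by simp only [Fm_add, Fm_Xp_pred, Fm_Xp_self]; decide))]

private lemma NpiB2 (j : ℤ) : Npi (Xp 6 (j-1) + Xp 4 (j-1) + Xp 8 j) = 2 := by
  have hE : Eset (Xp 6 (j-1) + Xp 4 (j-1) + Xp 8 j) =
      {Xp 6 (j-1) + Xp 4 (j-1), Xp 6 (j-1) + Xp 8 j, Xp 4 (j-1) + Xp 8 j} := by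
    have h1 : ((6,4) ∈ eqPairs ∨ (4,6) ∈ eqPairs) := by decide
    have h2 : (6,8) ∈ adjPairs := by decide
    have h3 : (4,8) ∈ adjPairs := by decide
    rw [Eset_eq]; ext ρ
    simp only [Set.mem_union, Set.mem_setOf_eq, Set.mem_insert_iff, Set.mem_singleton_iff]
    tauto
  rw [Npi, hE, ncard_three (ne_of_Fm (j := j) (by simp only [Fm_add, Fm_Xp_pred, Fm_Xp_self]; decide))
    (ne_of_Fm (j := j) (by simp only [Fm_add, Fm_Xp_pred, Fm_Xp_self]; decide)) (ne_of_Fm (j := j) (by simp only [Fm_add, Fm_Xp_pred, Fm_Xp_self]; decide))]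

private lemma NpiB3 (j : ℤ) : Npi (Xp 8 (j-1) + Xp 2 (j-1) + Xp 8 j) = 1 := by
  have hE : Eset (Xp 8 (j-1) + Xp 2 (j-1) + Xp 8 j) =
      {Xp 8 (j-1) + Xp 8 j, Xp 2 (j-1) + Xp 8 j} := by
    have h1 : ¬((8,2) ∈ eqPairs ∨ (2,8) ∈ eqPairs) := by decide
    have h2 : (8,8) ∈ adjPairs := by decide
    have h3 : (2,8) ∈ adjPairs := by decide
    rw [Eset_eq]; ext ρ
    simp only [Set.mem_union, Set.mem_setOf_eq, Set.mem_insert_iff, Set.mem_singleton_iff]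
    tauto
  rw [Npi, hE, Set.ncard_pair (ne_of_Fm (j := j) (by simp only [Fm_add, Fm_Xp_pred, Fm_Xp_self]; decide))]

private lemma NpiB4 (j : ℤ) : Npi (Xp 6 (j-1) + Xp 6 (j-1) + Xp 7 j) = 0 := by
  have hE : Eset (Xp 6 (j-1) + Xp 6 (j-1) + Xp 7 j) = {Xp 6 (j-1) + Xp 6 (j-1)} := by
    have h1 : ((6,6) ∈ eqPairs ∨ (6,6) ∈ eqPairs) := by decide
    have h2 : ¬((6,7) ∈ adjPairs) := by decide
    rw [Eset_eq]; ext ρ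
    simp only [Set.mem_union, Set.mem_setOf_eq, Set.mem_singleton_iff]
    tauto
  rw [Npi, hE, Set.ncard_singleton]

private lemma NpiB5 (j : ℤ) : Npi (Xp 7 (j-1) + Xp 6 (j-1) + Xp 6 j) = 1 := by
  have hE : Eset (Xp 7 (j-1) + Xp 6 (j-1) + Xp 6 j) =
      {Xp 7 (j-1) + Xp 6 (j-1), Xp 6 (j-1) + Xp 6 j} := by
    have h1 : ((7,6) ∈ eqPairs ∨ (6,7) ∈ eqPairs) := by decide
    have h2 : ¬((7,6) ∈ adjPairs) := by decide
    have h3 : (6,6) ∈ adjPairs := by decide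
    rw [Eset_eq]; ext ρ
    simp only [Set.mem_union, Set.mem_setOf_eq, Set.mem_insert_iff, Set.mem_singleton_iff]
    tauto
  rw [Npi, hE, Set.ncard_pair (ne_of_Fm (j := j) (by simp only [Fm_add, Fm_Xp_pred, Fm_Xp_self]; decide))]

private lemma NpiB6 (j : ℤ) : Npi (Xp 8 (j-1) + Xp 5 (j-1) + Xp 6 j) = 1 := by
  have hE : Eset (Xp 8 (j-1) + Xp 5 (j-1) + Xp 6 j) =
      {Xp 8 (j-1) + Xp 5 (j-1), Xp 5 (j-1) + Xp 6 j} := by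
    have h1 : ((8,5) ∈ eqPairs ∨ (5,8) ∈ eqPairs) := by decide
    have h2 : ¬((8,6) ∈ adjPairs) := by decide
    have h3 : (5,6) ∈ adjPairs := by decide
    rw [Eset_eq]; ext ρ
    simp only [Set.mem_union, Set.mem_setOf_eq, Set.mem_insert_iff, Set.mem_singleton_iff]
    tauto
  rw [Npi, hE, Set.ncard_pair (ne_of_Fm (j := j) (by simp only [Fm_add, Fm_Xp_pred, Fm_Xp_self]; decide))]

private lemma NpiB7 (j : ℤ) : Npi (Xp 8 (j-1) + Xp 4 (j-1) + Xp 6 j) = 0 := by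
  have hE : Eset (Xp 8 (j-1) + Xp 4 (j-1) + Xp 6 j) = ∅ := by
    have h1 : ¬((8,4) ∈ eqPairs ∨ (4,8) ∈ eqPairs) := by decide
    have h2 : ¬((8,6) ∈ adjPairs) := by decide
    have h3 : ¬((4,6) ∈ adjPairs) := by decide
    rw [Eset_eq]; ext ρ
    simp only [Set.mem_union, Set.mem_setOf_eq, Set.mem_empty_iff_false]
    tauto
  rw [Npi, hE]
  simp

private lemma NpiB8 (j : ℤ) : Npi (Xp 8 (j-1) + Xp 6 (j-1) + Xp 5 j) = 0 := by
  have hE : Eset (Xp 8 (j-1) + Xp 6 (j-1) + Xp 5 j) = {Xp 8 (j-1) + Xp 6 (j-1)} := by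
    have h1 : ((8,6) ∈ eqPairs ∨ (6,8) ∈ eqPairs) := by decide
    have h2 : ¬((8,5) ∈ adjPairs) := by decide
    have h3 : ¬((6,5) ∈ adjPairs) := by decide
    rw [Eset_eq]; ext ρ
    simp only [Set.mem_union, Set.mem_setOf_eq, Set.mem_singleton_iff]
    tauto
  rw [Npi, hE, Set.ncard_singleton]

private lemma NpiB9 (j : ℤ) : Npi (Xp 8 (j-1) + Xp 6 (j-1) + Xp 4 j) = 0 := by
  have hE : Eset (Xp 8 (j-1) + Xp 6 (j-1) + Xp 4 j) = {Xp 8 (j-1) + Xp 6 (j-1)} := by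
    have h1 : ((8,6) ∈ eqPairs ∨ (6,8) ∈ eqPairs) := by decide
    have h2 : ¬((8,4) ∈ adjPairs) := by decide
    have h3 : ¬((6,4) ∈ adjPairs) := by decide
    rw [Eset_eq]; ext ρ
    simp only [Set.mem_union, Set.mem_setOf_eq, Set.mem_singleton_iff]
    tauto
  rw [Npi, hE, Set.ncard_singleton]

private lemma NpiB10 (j : ℤ) : Npi (Xp 8 (j-1) + Xp 8 (j-1) + Xp 2 j) = 0 := by
  have hE : Eset (Xp 8 (j-1) + Xp 8 (j-1) + Xp 2 j) = {Xp 8 (j-1) + Xp 8 (j-1)} := by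
    have h1 : ((8,8) ∈ eqPairs ∨ (8,8) ∈ eqPairs) := by decide
    have h2 : ¬((8,2) ∈ adjPairs) := by decide
    rw [Eset_eq]; ext ρ
    simp only [Set.mem_union, Set.mem_setOf_eq, Set.mem_singleton_iff]
    tauto
  rw [Npi, hE, Set.ncard_singleton]

/-- There are exactly 10 colored partitions of shape `{j−1,j−1,j}` and weight `−α₁ − 2α₂`,
namely those of `tenB j`, and the sum of `N(π)` over them is 7. -/
theorem shape_jm1_jm1_j_wt_neg (j : ℤ) :
    {π : CPart | cpValid π ∧ cpShape π = {j - 1, j - 1, j} ∧ cpWt π = (-1, -2)} =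
      {π | π ∈ tenB j} ∧
    {π : CPart | cpValid π ∧ cpShape π = {j - 1, j - 1, j} ∧ cpWt π = (-1, -2)}.ncard = 10 ∧
    ((tenB j).map Npi).sum = 7 := by
  classical
  have hset : {π : CPart | cpValid π ∧ cpShape π = {j - 1, j - 1, j} ∧ cpWt π = (-1, -2)} =
      {π | π ∈ tenB j} := by
    ext π
    simp only [Set.mem_setOf_eq]
    constructor
    · rintro ⟨hval, hsh, hwt⟩
      obtain ⟨a, b, c, rfl⟩ := shape3 hsh
      have hmema : (a, j-1) ∈ (Xp a (j-1) + Xp b (j-1) + Xp c j).support := by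
        rw [← Finsupp.mem_toMultiset, toM_three]; simp
      have hmemb : (b, j-1) ∈ (Xp a (j-1) + Xp b (j-1) + Xp c j).support := by
        rw [← Finsupp.mem_toMultiset, toM_three]; simp
      have hmemc : (c, j) ∈ (Xp a (j-1) + Xp b (j-1) + Xp c j).support := by
        rw [← Finsupp.mem_toMultiset, toM_three]; simp
      obtain ⟨ha1, ha2⟩ := hval _ hmema
      obtain ⟨hb1, hb2⟩ := hval _ hmemb
      obtain ⟨hc1, hc2⟩ := hval _ hmemc
      rw [cpWt_three] at hwt
      have hg := wt_classify ha1 ha2 hb1 hb2 hc1 hc2 hwt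
      simp only [goodWt, List.mem_cons, List.not_mem_nil, or_false, Prod.mk.injEq] at hg
      simp only [tenB, List.mem_cons, List.not_mem_nil, or_false]
      rcases hg with ⟨rfl,rfl,rfl⟩|⟨rfl,rfl,rfl⟩|⟨rfl,rfl,rfl⟩|⟨rfl,rfl,rfl⟩|⟨rfl,rfl,rfl⟩|
        ⟨rfl,rfl,rfl⟩|⟨rfl,rfl,rfl⟩|⟨rfl,rfl,rfl⟩|⟨rfl,rfl,rfl⟩|⟨rfl,rfl,rfl⟩|⟨rfl,rfl,rfl⟩|
        ⟨rfl,rfl,rfl⟩|⟨rfl,rfl,rfl⟩|⟨rfl,rfl,rfl⟩|⟨rfl,rfl,rfl⟩|⟨rfl,rfl,rfl⟩|⟨rfl,rfl,rfl⟩|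
        ⟨rfl,rfl,rfl⟩ <;>
      first
        | (left; abel1)
        | (right; left; abel1)
        | (right; right; left; abel1)
        | (right; right; right; left; abel1)
        | (right; right; right; right; left; abel1)
        | (right; right; right; right; right; left; abel1)
        | (right; right; right; right; right; right; left; abel1)
        | (right; right; right; right; right; right; right; left; abel1)
        | (right; right; right; right; right; right; right; right; left; abel1)
        | (right; right; right; right; right; right; right; right; right; left; abel1)
        | (right; right; right; right; right; right; right; right; right; abel1)
    · intro hmem
      simp only [tenB, List.mem_cons, List.not_mem_nil, or_false] at hmem
      rcases hmem with rfl|rfl|rfl|rfl|rfl|rfl|rfl|rfl|rfl|rfl <;>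
        refine ⟨?_, ?_, ?_⟩ <;>
        first
          | exact cpValid_add (cpValid_add (cpValid_Xp (by norm_num) (by norm_num) _)
              (cpValid_Xp (by norm_num) (by norm_num) _)) (cpValid_Xp (by norm_num) (by norm_num) _)
          | (rw [cpShape_eq, toM_three]; rfl)
          | (rw [cpWt_three]; decide)
  refine ⟨hset, ?_, ?_⟩
  · rw [hset]
    have h : {π : CPart | π ∈ tenB j} = ((tenB j).toFinset : Set CPart) := by
      ext π; simp
    rw [h, Set.ncard_coe_finset, List.toFinset_card_of_nodup (tenB_nodup j)]
    simp [tenB]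
  · simp only [tenB, List.map_cons, List.map_nil, List.sum_cons, List.sum_nil]
    rw [NpiB1 j, NpiB2 j, NpiB3 j, NpiB4 j, NpiB5 j, NpiB6 j, NpiB7 j, NpiB8 j, NpiB9 j, NpiB10 j]
    norm_num
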